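/- Lemma D.1 (uniqueness of the maximizer under non-degeneracy): Assume R > 0, k ≥ 2, and that ζ is exchangeable and non-degenerate. If λ ∈ ℝ^k satisfies Σ_i λ_i² ≤ R² and F(λ) ≥ F(μ) for every μ ∈ ℝ^k with Σ_i μ_i² ≤ R² (i.e., λ maximizes F over the ball of radius R), then λ_i² = R²/k for every i ∈ {1,…,k}. -/
import Mathlib


open scoped BigOperators

/-- Objective `F(λ) = Σ_{(z,z')} ζ(z,z')·√(Σ_i λ_i²·1[z_i ≠ z'_i])`, where points of
`{−1,+1}^k` are encoded as `Fin k → Bool`. -/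
noncomputable def F {k : ℕ} (ζ : ((Fin k → Bool) × (Fin k → Bool)) → ℝ)
    (lam : Fin k → ℝ) : ℝ :=
  ∑ p : (Fin k → Bool) × (Fin k → Bool),
    ζ p * Real.sqrt (∑ i, (lam i) ^ 2 * (if p.1 i ≠ p.2 i then 1 else 0))

/-- `ζ` is exchangeable: invariant under simultaneous coordinate permutations. -/
def Exchangeable {k : ℕ} (ζ : ((Fin k → Bool) × (Fin k → Bool)) → ℝ) : Prop :=
  ∀ σ : Equiv.Perm (Fin k), ∀ p : (Fin k → Bool) × (Fin k → Bool),
    ζ (p.1 ∘ σ, p.2 ∘ σ) = ζ p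

/-- `ζ` is non-degenerate: any two distinct coordinates `j ≠ j'` satisfy
`ζ{z_j = z'_j and z_{j'} ≠ z'_{j'}} > 0`. -/
def NonDegenerate {k : ℕ} (ζ : ((Fin k → Bool) × (Fin k → Bool)) → ℝ) : Prop :=
  ∀ j j' : Fin k, j ≠ j' →
    0 < ∑ p : (Fin k → Bool) × (Fin k → Bool),
      if p.1 j = p.2 j ∧ p.1 j' ≠ p.2 j' then ζ p else 0

lemma sqrt_avg_le {x y : ℝ} (hx : 0 ≤ x) (hy : 0 ≤ y) :
    (Real.sqrt x + Real.sqrt y) / 2 ≤ Real.sqrt ((x + y) / 2) := by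
  have h1 : (Real.sqrt x + Real.sqrt y) / 2
      = Real.sqrt (((Real.sqrt x + Real.sqrt y) / 2) ^ 2) :=
    (Real.sqrt_sq (by positivity)).symm
  rw [h1]
  apply Real.sqrt_le_sqrt
  nlinarith [Real.sq_sqrt hx, Real.sq_sqrt hy, sq_nonneg (Real.sqrt x - Real.sqrt y)]

lemma sqrt_avg_lt {x y : ℝ} (hx : 0 ≤ x) (hy : 0 ≤ y) (hxy : x ≠ y) :
    (Real.sqrt x + Real.sqrt y) / 2 < Real.sqrt ((x + y) / 2) := by
  have hs : Real.sqrt x ≠ Real.sqrt y := by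
    intro h
    exact hxy (by rw [← Real.sq_sqrt hx, ← Real.sq_sqrt hy, h])
  have h1 : (Real.sqrt x + Real.sqrt y) / 2
      = Real.sqrt (((Real.sqrt x + Real.sqrt y) / 2) ^ 2) :=
    (Real.sqrt_sq (by positivity)).symm
  rw [h1]
  apply Real.sqrt_lt_sqrt (by positivity)
  have hne : Real.sqrt x - Real.sqrt y ≠ 0 := sub_ne_zero.mpr hs
  have h2 : (Real.sqrt x - Real.sqrt y) ^ 2 > 0 := by positivity
  nlinarith [Real.sq_sqrt hx, Real.sq_sqrt hy]

lemma F_comp_perm {k : ℕ} (ζ : ((Fin k → Bool) × (Fin k → Bool)) → ℝ)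
    (hex : Exchangeable ζ) (σ : Equiv.Perm (Fin k)) (lam : Fin k → ℝ) :
    F ζ (lam ∘ σ) = F ζ lam := by
  unfold F
  set E : ((Fin k → Bool) × (Fin k → Bool)) ≃ ((Fin k → Bool) × (Fin k → Bool)) :=
    Equiv.prodCongr (Equiv.arrowCongr σ (Equiv.refl Bool))
      (Equiv.arrowCongr σ (Equiv.refl Bool)) with hE
  apply Fintype.sum_equiv E
  intro p
  have hEp : E p = (p.1 ∘ σ.symm, p.2 ∘ σ.symm) := by
    rfl
  have hζ : ζ (E p) = ζ p := by
    have h := hex σ (E p)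
    rw [hEp] at h ⊢
    simp only at h
    have h1 : (p.1 ∘ σ.symm) ∘ σ = p.1 := by funext i; simp [Function.comp]
    have h2 : (p.2 ∘ σ.symm) ∘ σ = p.2 := by funext i; simp [Function.comp]
    rw [h1, h2] at h
    exact h.symm
  rw [hEp] at hζ
  rw [hEp, hζ]
  congr 1
  congr 1
  exact Fintype.sum_equiv σ _ _ (fun i => by simp [Function.comp])

/-- If two coordinates of `lam` have different squares, averaging them strictly
increases `F`. -/
lemma exists_better {k : ℕ} (ζ : ((Fin k → Bool) × (Fin k → Bool)) → ℝ)
    (hζ0 : ∀ p, 0 ≤ ζ p) (hex : Exchangeable ζ) (hnd : NonDegenerate ζ)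
    (lam : Fin k → ℝ) (j j' : Fin k) (hjj : j ≠ j')
    (hne : lam j ^ 2 ≠ lam j' ^ 2) :
    ∃ mu : Fin k → ℝ, (∑ i, (mu i) ^ 2) = (∑ i, (lam i) ^ 2) ∧ F ζ lam < F ζ mu := by
  set σ : Equiv.Perm (Fin k) := Equiv.swap j j' with hσ
  set mu : Fin k → ℝ := fun i => Real.sqrt ((lam i ^ 2 + lam (σ i) ^ 2) / 2) with hmu
  have hmusq : ∀ i, mu i ^ 2 = (lam i ^ 2 + lam (σ i) ^ 2) / 2 := fun i =>
    Real.sq_sqrt (by positivity)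
  refine ⟨mu, ?_, ?_⟩
  · have hperm : (∑ i, lam (σ i) ^ 2) = ∑ i, lam i ^ 2 :=
      Equiv.sum_comp σ (fun i => lam i ^ 2)
    calc (∑ i, mu i ^ 2) = ∑ i, (lam i ^ 2 + lam (σ i) ^ 2) / 2 := by
          exact Finset.sum_congr rfl (fun i _ => hmusq i)
      _ = ((∑ i, lam i ^ 2) + (∑ i, lam (σ i) ^ 2)) / 2 := by
          rw [← Finset.sum_add_distrib, Finset.sum_div]
      _ = ∑ i, lam i ^ 2 := by rw [hperm]; ring
  · -- strict improvement
    -- notation for the indicator sums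
    set s : ((Fin k → Bool) × (Fin k → Bool)) → Fin k → ℝ :=
      fun p i => if p.1 i ≠ p.2 i then (1:ℝ) else 0 with hs
    have hsnn : ∀ p i, 0 ≤ s p i := by
      intro p i; simp only [hs]; split <;> norm_num
    set x : ((Fin k → Bool) × (Fin k → Bool)) → ℝ :=
      fun p => ∑ i, lam i ^ 2 * s p i with hx
    set y : ((Fin k → Bool) × (Fin k → Bool)) → ℝ :=
      fun p => ∑ i, lam (σ i) ^ 2 * s p i with hy
    have hxnn : ∀ p, 0 ≤ x p := fun p =>
      Finset.sum_nonneg (fun i _ => by positivity)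
    have hynn : ∀ p, 0 ≤ y p := fun p =>
      Finset.sum_nonneg (fun i _ => by positivity)
    have hinner : ∀ p, (∑ i, mu i ^ 2 * s p i) = (x p + y p) / 2 := by
      intro p
      calc (∑ i, mu i ^ 2 * s p i)
          = ∑ i, (lam i ^ 2 * s p i + lam (σ i) ^ 2 * s p i) / 2 := by
            refine Finset.sum_congr rfl (fun i _ => ?_)
            rw [hmusq i]; ring
        _ = (x p + y p) / 2 := by
            rw [hx, hy, ← Finset.sum_add_distrib, Finset.sum_div]
    -- there is a point with positive mass where x ≠ y
    obtain ⟨p₀, hp₀⟩ : ∃ p₀ : (Fin k → Bool) × (Fin k → Bool), (if p₀.1 j = p₀.2 j ∧ p₀.1 j' ≠ p₀.2 j' then ζ p₀ else 0) ≠ 0 := by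
      have := hnd j j' hjj
      by_contra hc
      push_neg at hc
      rw [Finset.sum_congr rfl (fun p _ => hc p)] at this
      simp at this
    have hcond : p₀.1 j = p₀.2 j ∧ p₀.1 j' ≠ p₀.2 j' := by
      by_contra hc; simp [hc] at hp₀
    have hζp₀ : 0 < ζ p₀ := by
      rcases (hζ0 p₀).lt_or_eq with h | h
      · exact h
      · exfalso; apply hp₀; simp [hcond, ← h]
    have hsj : s p₀ j = 0 := by simp [hs, hcond.1]
    have hsj' : s p₀ j' = 1 := by simp [hs, hcond.2]
    have hxy : x p₀ ≠ y p₀ := by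
      intro hxyeq
      have hdiff : x p₀ - y p₀ = ∑ i, (lam i ^ 2 - lam (σ i) ^ 2) * s p₀ i := by
        rw [hx, hy, ← Finset.sum_sub_distrib]
        exact Finset.sum_congr rfl (fun i _ => by ring)
      have hterm : ∀ i ∈ Finset.univ, i ≠ j ∧ i ≠ j' →
          (lam i ^ 2 - lam (σ i) ^ 2) * s p₀ i = 0 := by
        intro i _ ⟨h1, h2⟩
        rw [hσ]
        rw [Equiv.swap_apply_of_ne_of_ne h1 h2]
        ring
      have hsum2 : (∑ i, (lam i ^ 2 - lam (σ i) ^ 2) * s p₀ i)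
          = (lam j ^ 2 - lam (σ j) ^ 2) * s p₀ j
            + (lam j' ^ 2 - lam (σ j') ^ 2) * s p₀ j' := by
        exact Finset.sum_eq_add_of_mem j j' (Finset.mem_univ j) (Finset.mem_univ j') hjj hterm
      rw [hxyeq] at hdiff
      rw [hsum2, hsj, hsj'] at hdiff
      rw [hσ] at hdiff
      rw [Equiv.swap_apply_right] at hdiff
      apply hne
      have := hdiff.symm
      nlinarith [this]
    -- F ζ mu > (F ζ lam + F ζ (lam ∘ σ)) / 2 = F ζ lam
    have hFσ : F ζ (lam ∘ σ) = F ζ lam := F_comp_perm ζ hex σ lam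
    have hsumlt :
        (∑ p : (Fin k → Bool) × (Fin k → Bool),
          ζ p * ((Real.sqrt (x p) + Real.sqrt (y p)) / 2)) < F ζ mu := by
      unfold F
      apply Finset.sum_lt_sum
      · intro p _
        have h1 : (∑ i, mu i ^ 2 * s p i) = (x p + y p) / 2 := hinner p
        have h2 : (Real.sqrt (x p) + Real.sqrt (y p)) / 2
            ≤ Real.sqrt ((x p + y p) / 2) := sqrt_avg_le (hxnn p) (hynn p)
        have h3 : (∑ i, mu i ^ 2 * (if p.1 i ≠ p.2 i then (1:ℝ) else 0))
            = (x p + y p) / 2 := h1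
        rw [h3]
        exact mul_le_mul_of_nonneg_left h2 (hζ0 p)
      · refine ⟨p₀, Finset.mem_univ _, ?_⟩
        have h3 : (∑ i, mu i ^ 2 * (if p₀.1 i ≠ p₀.2 i then (1:ℝ) else 0))
            = (x p₀ + y p₀) / 2 := hinner p₀
        rw [h3]
        exact mul_lt_mul_of_pos_left (sqrt_avg_lt (hxnn p₀) (hynn p₀) hxy) hζp₀
    have hsplit :
        (∑ p : (Fin k → Bool) × (Fin k → Bool),
          ζ p * ((Real.sqrt (x p) + Real.sqrt (y p)) / 2))
        = (F ζ lam + F ζ (lam ∘ σ)) / 2 := by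
      unfold F
      rw [← Finset.sum_add_distrib, Finset.sum_div]
      refine Finset.sum_congr rfl (fun p _ => ?_)
      have hxp : (∑ i, lam i ^ 2 * (if p.1 i ≠ p.2 i then (1:ℝ) else 0)) = x p := rfl
      have hyp : (∑ i, (lam ∘ σ) i ^ 2 * (if p.1 i ≠ p.2 i then (1:ℝ) else 0)) = y p := rfl
      rw [hxp, hyp]; ring
    rw [hsplit, hFσ] at hsumlt
    linarith

lemma F_smul {k : ℕ} (ζ : ((Fin k → Bool) × (Fin k → Bool)) → ℝ)
    (t : ℝ) (ht : 0 ≤ t) (lam : Fin k → ℝ) :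
    F ζ (fun i => t * lam i) = t * F ζ lam := by
  unfold F
  rw [Finset.mul_sum]
  refine Finset.sum_congr rfl (fun p _ => ?_)
  have h1 : (∑ i, (t * lam i) ^ 2 * (if p.1 i ≠ p.2 i then (1:ℝ) else 0))
      = t ^ 2 * ∑ i, lam i ^ 2 * (if p.1 i ≠ p.2 i then (1:ℝ) else 0) := by
    rw [Finset.mul_sum]
    exact Finset.sum_congr rfl (fun i _ => by ring)
  rw [h1, Real.sqrt_mul (by positivity), Real.sqrt_sq ht]
  ring

/-- Lemma D.1 (uniqueness of the maximizer under non-degeneracy): any maximizer of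
`F` over the ball of radius `R` has `λ_i² = R²/k` for every `i`. -/
theorem maximizer_is_uniform
    (k : ℕ) (hk : 2 ≤ k) (R : ℝ) (hR : 0 < R)
    (ζ : ((Fin k → Bool) × (Fin k → Bool)) → ℝ)
    (hζ0 : ∀ p, 0 ≤ ζ p) (hζ1 : ∑ p, ζ p = 1)
    (hex : Exchangeable ζ) (hnd : NonDegenerate ζ)
    (lam : Fin k → ℝ) (hball : (∑ i, (lam i) ^ 2) ≤ R ^ 2)
    (hmax : ∀ mu : Fin k → ℝ, (∑ i, (mu i) ^ 2) ≤ R ^ 2 → F ζ mu ≤ F ζ lam) :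
    ∀ i, (lam i) ^ 2 = R ^ 2 / k := by
  have hk0 : (0:ℝ) < k := by positivity
  -- step 1: all squares are equal
  have hall : ∀ j j' : Fin k, lam j ^ 2 = lam j' ^ 2 := by
    intro j j'
    by_cases hjj : j = j'
    · rw [hjj]
    · by_contra hne
      obtain ⟨mu, hsum, hlt⟩ := exists_better ζ hζ0 hex hnd lam j j' hjj hne
      have := hmax mu (by rw [hsum]; exact hball)
      linarith
  -- two distinct indices
  have h0k : (0:ℕ) < k := by omega
  have h1k : (1:ℕ) < k := by omega
  set j0 : Fin k := ⟨0, h0k⟩ with hj0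
  set j1 : Fin k := ⟨1, h1k⟩ with hj1
  have hj01 : j0 ≠ j1 := by simp [hj0, hj1, Fin.ext_iff]
  -- step 2: F ζ lam > 0
  have hFpos : 0 < F ζ lam := by
    set mu0 : Fin k → ℝ := fun i => if i = j1 then R else 0 with hmu0
    have hmu0ball : (∑ i, mu0 i ^ 2) = R ^ 2 := by
      rw [hmu0]
      rw [Finset.sum_congr rfl (fun i _ => show (if i = j1 then R else 0) ^ 2
        = if i = j1 then R ^ 2 else 0 by split <;> simp)]
      simp
    have hFmu0 : 0 < F ζ mu0 := by
      unfold F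
      obtain ⟨p₀, hp₀⟩ : ∃ p₀ : (Fin k → Bool) × (Fin k → Bool),
          (if p₀.1 j0 = p₀.2 j0 ∧ p₀.1 j1 ≠ p₀.2 j1 then ζ p₀ else 0) ≠ 0 := by
        have := hnd j0 j1 hj01
        by_contra hc
        push_neg at hc
        rw [Finset.sum_congr rfl (fun p _ => hc p)] at this
        simp at this
      have hcond : p₀.1 j0 = p₀.2 j0 ∧ p₀.1 j1 ≠ p₀.2 j1 := by
        by_contra hc; simp [hc] at hp₀
      have hζp₀ : 0 < ζ p₀ := by
        rcases (hζ0 p₀).lt_or_eq with h | h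
        · exact h
        · exfalso; apply hp₀; simp [hcond, ← h]
      apply Finset.sum_pos'
      · intro p _
        exact mul_nonneg (hζ0 p) (Real.sqrt_nonneg _)
      · refine ⟨p₀, Finset.mem_univ _, ?_⟩
        apply mul_pos hζp₀
        apply Real.sqrt_pos.mpr
        have hterm : ∀ i : Fin k, mu0 i ^ 2 * (if p₀.1 i ≠ p₀.2 i then (1:ℝ) else 0)
            = if i = j1 then R ^ 2 else 0 := by
          intro i
          rw [hmu0]
          by_cases hi : i = j1
          · subst hi; simp [hcond.2]
          · simp [hi]
        rw [Finset.sum_congr rfl (fun i _ => hterm i)]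
        simp [hR, sq_nonneg]
    exact lt_of_lt_of_le hFmu0 (hmax mu0 (le_of_eq hmu0ball))
  -- step 3: the constraint is saturated
  have hS : (∑ i, lam i ^ 2) = R ^ 2 := by
    by_contra hne
    have hSlt : (∑ i, lam i ^ 2) < R ^ 2 := lt_of_le_of_ne hball hne
    have hSpos : 0 < ∑ i, lam i ^ 2 := by
      by_contra hc
      push_neg at hc
      have hS0 : (∑ i, lam i ^ 2) = 0 :=
        le_antisymm hc (Finset.sum_nonneg (fun i _ => sq_nonneg _))
      have hlam0 : ∀ i, lam i = 0 := by
        intro i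
        have := (Finset.sum_eq_zero_iff_of_nonneg
          (fun i _ => sq_nonneg (lam i))).mp hS0 i (Finset.mem_univ i)
        exact pow_eq_zero_iff (by norm_num) |>.mp this
      have : F ζ lam = 0 := by
        unfold F
        apply Finset.sum_eq_zero
        intro p _
        have h0 : (∑ i, lam i ^ 2 * (if p.1 i ≠ p.2 i then (1:ℝ) else 0)) = 0 :=
          Finset.sum_eq_zero (fun i _ => by rw [hlam0 i]; ring)
        rw [h0]
        simp
      linarith
    set t : ℝ := R / Real.sqrt (∑ i, lam i ^ 2) with hT
    have hsqpos : 0 < Real.sqrt (∑ i, lam i ^ 2) := Real.sqrt_pos.mpr hSpos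
    have ht1 : 1 < t := by
      rw [hT, lt_div_iff₀ hsqpos, one_mul]
      have : Real.sqrt (∑ i, lam i ^ 2) < Real.sqrt (R ^ 2) :=
        Real.sqrt_lt_sqrt (le_of_lt hSpos) hSlt
      rwa [Real.sqrt_sq hR.le] at this
    have htpos : 0 < t := lt_trans one_pos ht1
    have hscale : (∑ i, (t * lam i) ^ 2) = R ^ 2 := by
      rw [Finset.sum_congr rfl (fun i _ => show (t * lam i)^2 = t^2 * lam i ^2 by ring)]
      rw [← Finset.mul_sum, hT, div_pow, Real.sq_sqrt hSpos.le]
      field_simp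
    have := hmax (fun i => t * lam i) (le_of_eq hscale)
    rw [F_smul ζ t htpos.le lam] at this
    nlinarith
  -- conclude
  intro i
  have hsum : (∑ j, lam j ^ 2) = k * lam i ^ 2 := by
    rw [Finset.sum_congr rfl (fun j _ => hall j i)]
    simp [Finset.sum_const, Finset.card_univ, mul_comm]
  rw [hsum] at hS
  field_simp
  linarith
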